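/- Fix constants ε, ℓ, γ, δ, μ* > 0 with ℓ ≥ δ and 2γ² ≥ 3ℓ. Define τ(t) = ε − ℓt, a(t) = 2⁵e^{(γ+1)τ}, b(t) = 8e^{τ}, u̲(s,t) = a(s^{3/2} + 3τ³s)/(s^{1/2}+τ³)³ and w̲(s,t) = bs/(s^{1/2}+τ³). Then for all s ∈ (0,1) and t ∈ (0,ε/ℓ): w̲_t − 16 s^{3/2} w̲_{ss} + δ w̲ − u̲ ≤ 0. -/

import Mathlib

open Real


private lemma stmt_13_aux (ℓ γ δ T r E : ℝ) (hγ : 0 < γ)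
    (hγℓ : 2*γ^2 ≥ 3*ℓ) (hℓδ : ℓ ≥ δ) (hτ0 : 0 < T) (hr0 : 0 < r)
    (hquad : 1 + γ*T + (γ*T)^2/2 ≤ E) :
    ℓ * (3 * T ^ 2 - (r + T ^ 3)) * (r + T ^ 3) + 4 * (r + 3 * T ^ 3)
      + δ * (r + T ^ 3) ^ 2 - 4 * E * (r + 3 * T ^ 3) ≤ 0 := by
  have h5 : (E - (1 + γ*T + (γ*T)^2/2)) * (r + 3*T^3) ≥ 0 :=
    mul_nonneg (by linarith) (by positivity)
  linarith [mul_nonneg (sub_nonneg.mpr hγℓ) (mul_nonneg (sq_nonneg T) hr0.le),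
    mul_nonneg (sub_nonneg.mpr hγℓ) (pow_nonneg hτ0.le 5),
    mul_nonneg (mul_nonneg hγ.le hτ0.le) (by positivity : (0:ℝ) ≤ r + 3*T^3),
    mul_nonneg (sub_nonneg.mpr hℓδ) (sq_nonneg (r + T^3)),
    mul_nonneg (sq_nonneg γ) (pow_nonneg hτ0.le 5), h5]


private lemma stmt_13_key (F E r c T δ ℓ : ℝ) (hr0 : 0 < r) (hDne : r + c ≠ 0) :
    (8 * (F * -ℓ) * r^2 * (r + c) - 8 * F * r^2 * ((3:ℕ) * T^2 * -ℓ)) / (r + c)^2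
      - 16 * r^3 * ((8 * F * (1/2 * (1/r) / 2) * (r + c)^2
        - 8 * F * (r/2 + c) * ((2:ℕ) * (r + c)^1 * (1/2 * (1/r)))) / ((r + c)^2)^2)
      + δ * (8 * F * r^2 / (r + c)) - 2^5 * (E * F) * (r^3 + 3*c*r^2) / (r + c)^3
      = 8 * F * r^2 * (ℓ*(3*T^2 - (r + c))*(r + c) + 4*(r + 3*c) + δ*(r + c)^2 - 4*E*(r + 3*c))
        / (r + c)^3 := by
  have h1 : ((r+c)^2)^2 = (r+c)^4 := by ring
  rw [h1]
  field_simp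
  ring

set_option maxHeartbeats 1000000 in
theorem stmt_13 (ε ℓ γ δ μs : ℝ) (hε : 0 < ε) (hℓ : 0 < ℓ) (hγ : 0 < γ)
    (hδ : 0 < δ) (hμ : 0 < μs) (hℓδ : ℓ ≥ δ) (hγℓ : 2*γ^2 ≥ 3*ℓ) :
    let τ : ℝ → ℝ := fun t => ε - ℓ*t
    let a : ℝ → ℝ := fun t => 2^5 * Real.exp ((γ+1) * τ t)
    let b : ℝ → ℝ := fun t => 8 * Real.exp (τ t)
    let u : ℝ → ℝ → ℝ := fun s t =>
      a t * (s ^ ((3:ℝ)/2) + 3*(τ t)^3*s) / (s ^ ((1:ℝ)/2) + (τ t)^3)^3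
    let w : ℝ → ℝ → ℝ := fun s t => b t * s / (s ^ ((1:ℝ)/2) + (τ t)^3)
    ∀ s ∈ Set.Ioo (0:ℝ) 1, ∀ t ∈ Set.Ioo 0 (ε/ℓ),
      deriv (fun t' => w s t') t
        - 16 * s ^ ((3:ℝ)/2) * deriv (fun s' => deriv (fun s'' => w s'' t) s') s
        + δ * w s t - u s t ≤ 0 := by
  intro τ a b u w s hs t ht
  obtain ⟨hs0, hs1⟩ := hs
  obtain ⟨ht0, ht1⟩ := ht
  have hτ0 : 0 < ε - ℓ*t := by
    have : t * ℓ < ε := (lt_div_iff₀ hℓ).mp ht1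
    nlinarith
  set c : ℝ := (ε - ℓ*t)^3 with hc
  have hc0 : 0 < c := by positivity
  have hq0 : 0 < s ^ ((1:ℝ)/2) := Real.rpow_pos_of_pos hs0 _
  set r : ℝ := s ^ ((1:ℝ)/2) with hrdef
  have hr2 : r^2 = s := by
    rw [hrdef, ← Real.rpow_natCast (s ^ ((1:ℝ)/2)) 2, ← Real.rpow_mul hs0.le]
    norm_num
  have hr3 : s ^ ((3:ℝ)/2) = r^3 := by
    rw [hrdef, ← Real.rpow_natCast (s ^ ((1:ℝ)/2)) 3, ← Real.rpow_mul hs0.le]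
    norm_num
  have hD0 : 0 < r + c := by positivity
  have hDne : r + c ≠ 0 := hD0.ne'
  -- time derivative
  have hτ' : HasDerivAt (fun t' => ε - ℓ*t') (-ℓ) t := by
    simpa using ((hasDerivAt_id t).const_mul ℓ).const_sub ε
  have hnum_t : HasDerivAt (fun t' => 8 * Real.exp (ε - ℓ*t') * s)
      (8 * (Real.exp (ε - ℓ*t) * (-ℓ)) * s) t := (hτ'.exp.const_mul 8).mul_const s
  have hden_t : HasDerivAt (fun t' => s ^ ((1:ℝ)/2) + (ε - ℓ*t')^3)
      ((3:ℕ) * (ε - ℓ*t)^2 * (-ℓ)) t := by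
    simpa using ((hτ'.pow 3).const_add (s ^ ((1:ℝ)/2)))
  have hwt : HasDerivAt (fun t' => 8 * Real.exp (ε - ℓ*t') * s / (s ^ ((1:ℝ)/2) + (ε - ℓ*t')^3))
      ((8 * (Real.exp (ε - ℓ*t) * (-ℓ)) * s * (r + c)
        - 8 * Real.exp (ε - ℓ*t) * s * ((3:ℕ) * (ε - ℓ*t)^2 * (-ℓ))) / (r + c)^2) t :=
    hnum_t.div hden_t hDne
  -- first space derivative, at arbitrary x > 0
  have hinner : ∀ x : ℝ, 0 < x →
      HasDerivAt (fun s'' => 8 * Real.exp (ε - ℓ*t) * s'' / (s'' ^ ((1:ℝ)/2) + (ε - ℓ*t)^3))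
        (8 * Real.exp (ε - ℓ*t) * (x ^ ((1:ℝ)/2)/2 + c) / (x ^ ((1:ℝ)/2) + c)^2) x := by
    intro x hx
    have hp : HasDerivAt (fun y : ℝ => y ^ ((1:ℝ)/2)) ((1/2) * x ^ ((1:ℝ)/2 - 1)) x :=
      Real.hasDerivAt_rpow_const (Or.inl hx.ne')
    have hnum : HasDerivAt (fun s'' : ℝ => 8 * Real.exp (ε - ℓ*t) * s'')
        (8 * Real.exp (ε - ℓ*t) * 1) x := (hasDerivAt_id x).const_mul _
    have hden : HasDerivAt (fun s'' : ℝ => s'' ^ ((1:ℝ)/2) + (ε - ℓ*t)^3)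
        ((1/2) * x ^ ((1:ℝ)/2 - 1)) x := hp.add_const _
    have hxD : x ^ ((1:ℝ)/2) + (ε - ℓ*t)^3 ≠ 0 := by
      have := Real.rpow_pos_of_pos hx ((1:ℝ)/2); positivity
    have hdiv := hnum.div hden hxD
    have hxh : x * ((1/2) * x ^ ((1:ℝ)/2 - 1)) = x ^ ((1:ℝ)/2) / 2 := by
      rw [Real.rpow_sub hx, Real.rpow_one]
      field_simp
    have hval : (8 * Real.exp (ε - ℓ*t) * 1 * (x ^ ((1:ℝ)/2) + (ε - ℓ*t)^3)
        - 8 * Real.exp (ε - ℓ*t) * x * ((1/2) * x ^ ((1:ℝ)/2 - 1)))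
        = 8 * Real.exp (ε - ℓ*t) * (x ^ ((1:ℝ)/2)/2 + c) := by
      rw [mul_assoc (8 * Real.exp (ε - ℓ*t)) x, hxh, ← hc]
      ring
    rw [← hc] at hdiv
    rw [← hval]
    exact hdiv
  -- second space derivative
  have hp : HasDerivAt (fun y : ℝ => y ^ ((1:ℝ)/2)) ((1/2) * s ^ ((1:ℝ)/2 - 1)) s :=
    Real.hasDerivAt_rpow_const (Or.inl hs0.ne')
  have hhalf : s ^ ((1:ℝ)/2 - 1) = 1/r := by
    rw [Real.rpow_sub hs0, Real.rpow_one, ← hrdef, ← hr2]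
    field_simp
  have hnum2 : HasDerivAt (fun x : ℝ => 8 * Real.exp (ε - ℓ*t) * (x ^ ((1:ℝ)/2)/2 + c))
      (8 * Real.exp (ε - ℓ*t) * ((1/2) * s ^ ((1:ℝ)/2 - 1) / 2)) s :=
    ((hp.div_const 2).add_const c).const_mul _
  have hden2 : HasDerivAt (fun x : ℝ => (x ^ ((1:ℝ)/2) + c)^2)
      ((2:ℕ) * (s ^ ((1:ℝ)/2) + c)^1 * ((1/2) * s ^ ((1:ℝ)/2 - 1))) s :=
    (hp.add_const c).pow 2
  have hD2ne : ((s:ℝ) ^ ((1:ℝ)/2) + c)^2 ≠ 0 := by rw [← hrdef]; positivity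
  have hg : HasDerivAt (fun x : ℝ => 8 * Real.exp (ε - ℓ*t) * (x ^ ((1:ℝ)/2)/2 + c) / (x ^ ((1:ℝ)/2) + c)^2)
      ((8 * Real.exp (ε - ℓ*t) * ((1/2) * s ^ ((1:ℝ)/2 - 1) / 2) * (s ^ ((1:ℝ)/2) + c)^2
        - 8 * Real.exp (ε - ℓ*t) * (s ^ ((1:ℝ)/2)/2 + c) *
          ((2:ℕ) * (s ^ ((1:ℝ)/2) + c)^1 * ((1/2) * s ^ ((1:ℝ)/2 - 1)))) / ((s ^ ((1:ℝ)/2) + c)^2)^2) s :=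
    hnum2.div hden2 hD2ne
  -- rewrite the goal
  have hderiv_t : deriv (fun t' => w s t') t
      = (8 * (Real.exp (ε - ℓ*t) * (-ℓ)) * s * (r + c)
        - 8 * Real.exp (ε - ℓ*t) * s * ((3:ℕ) * (ε - ℓ*t)^2 * (-ℓ))) / (r + c)^2 := by
    simp only [w, b, τ]
    exact hwt.deriv
  have hEq : (fun s' => deriv (fun s'' => w s'' t) s')
      =ᶠ[nhds s] (fun x : ℝ => 8 * Real.exp (ε - ℓ*t) * (x ^ ((1:ℝ)/2)/2 + c) / (x ^ ((1:ℝ)/2) + c)^2) := by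
    filter_upwards [isOpen_Ioi.mem_nhds hs0] with x hx
    simp only [w, b, τ]
    rw [← hc]
    exact (hinner x hx).deriv
  have hderiv_ss : deriv (fun s' => deriv (fun s'' => w s'' t) s') s
      = (8 * Real.exp (ε - ℓ*t) * ((1/2) * s ^ ((1:ℝ)/2 - 1) / 2) * (s ^ ((1:ℝ)/2) + c)^2
        - 8 * Real.exp (ε - ℓ*t) * (s ^ ((1:ℝ)/2)/2 + c) *
          ((2:ℕ) * (s ^ ((1:ℝ)/2) + c)^1 * ((1/2) * s ^ ((1:ℝ)/2 - 1)))) / ((s ^ ((1:ℝ)/2) + c)^2)^2 := by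
    rw [hEq.deriv_eq]
    exact hg.deriv
  rw [hderiv_t, hderiv_ss]
  simp only [w, u, a, b, τ, ← hc, ← hrdef]
  rw [hhalf, hr3, ← hr2]
  -- exponential facts
  set F : ℝ := Real.exp (ε - ℓ*t) with hF
  have hF0 : 0 < F := Real.exp_pos _
  set E : ℝ := Real.exp (γ * (ε - ℓ*t)) with hE
  have hE0 : 0 < E := Real.exp_pos _
  have hEF : Real.exp ((γ+1) * (ε - ℓ*t)) = E * F := by
    rw [hE, hF, ← Real.exp_add]; ring_nf
  rw [hEF]
  have hquad : 1 + γ*(ε - ℓ*t) + (γ*(ε - ℓ*t))^2/2 ≤ E :=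
    Real.quadratic_le_exp_of_nonneg (by positivity)
  set T : ℝ := ε - ℓ*t with hT
  have hr0 : 0 < r := hq0
  rw [stmt_13_key F E r c T δ ℓ hr0 hDne]
  apply div_nonpos_of_nonpos_of_nonneg _ (by positivity)
  apply mul_nonpos_of_nonneg_of_nonpos (by positivity)
  rw [hc]
  exact stmt_13_aux ℓ γ δ T r E hγ hγℓ hℓδ hτ0 hr0 hquad
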